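/- The KL divergence between p and its co-cluster approximation decomposes along columns (features): D(p ‖ p̂) = ∑_{w ∈ W} p₂(w) · D(p(·|w) ‖ p̂(·|C_W w)). -/

import Mathlib

open scoped BigOperators

noncomputable section

/-- Kullback–Leibler divergence `D(g‖h)` between nonnegative functions on a finite type,
`D(g‖h) = ∑_{t : g t > 0} g t * log (g t / h t)`, with the convention `D(g‖h) = ⊤`
whenever `g t > 0 = h t` for some `t`. -/
def KLdiv {T : Type*} [Fintype T] (g h : T → ℝ) : EReal :=
  if ∃ t, 0 < g t ∧ h t = 0 then ⊤
  else ((∑ t ∈ Finset.univ.filter (fun t => 0 < g t),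
      g t * Real.log (g t / h t) : ℝ) : EReal)

/-- Row marginal `p₁(x) = ∑_w p(x,w)`. -/
def marg₁ {A B : Type*} [Fintype B] (p : A × B → ℝ) (x : A) : ℝ := ∑ w, p (x, w)

/-- Column marginal `p₂(w) = ∑_x p(x,w)`. -/
def marg₂ {A B : Type*} [Fintype A] (p : A × B → ℝ) (w : B) : ℝ := ∑ x, p (x, w)

/-- Co-clustered distribution `p*(x*,w*) = ∑_{x : C_X x = x*} ∑_{w : C_W w = w*} p(x,w)`. -/
def coclust {A B As Bs : Type*} [Fintype A] [Fintype B] [DecidableEq As] [DecidableEq Bs]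
    (p : A × B → ℝ) (CX : A → As) (CW : B → Bs) : As × Bs → ℝ :=
  fun c => ∑ x ∈ Finset.univ.filter (fun x => CX x = c.1),
             ∑ w ∈ Finset.univ.filter (fun w => CW w = c.2), p (x, w)

/-- Approximating distribution
`p̂(x,w) = p*(C_X x, C_W w) · p₁(x) · p₂(w) / (p₁*(C_X x) · p₂*(C_W w))`. -/
def approx {A B As Bs : Type*} [Fintype A] [Fintype B] [Fintype As] [Fintype Bs]
    [DecidableEq As] [DecidableEq Bs]
    (p : A × B → ℝ) (CX : A → As) (CW : B → Bs) : A × B → ℝ :=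
  fun c =>
    coclust p CX CW (CX c.1, CW c.2) * marg₁ p c.1 * marg₂ p c.2 /
      (marg₁ (coclust p CX CW) (CX c.1) * marg₂ (coclust p CX CW) (CW c.2))

/-- Conditional distribution `p(w|x) = p(x,w)/p₁(x)` on `B`. -/
def condRow {A B : Type*} [Fintype B] (p : A × B → ℝ) (x : A) : B → ℝ :=
  fun w => p (x, w) / marg₁ p x

/-- Conditional distribution `p(x|w) = p(x,w)/p₂(w)` on `A`. -/
def condCol {A B : Type*} [Fintype A] (p : A × B → ℝ) (w : B) : A → ℝ :=
  fun x => p (x, w) / marg₂ p w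

/-- Conditional approximating distribution
`p̂(w|x*) = p*(x*, C_W w) · p₂(w) / (p₁*(x*) · p₂*(C_W w))` on `B`. -/
def approxCondRow {A B As Bs : Type*} [Fintype A] [Fintype B] [Fintype As] [Fintype Bs]
    [DecidableEq As] [DecidableEq Bs]
    (p : A × B → ℝ) (CX : A → As) (CW : B → Bs) (xs : As) : B → ℝ :=
  fun w =>
    coclust p CX CW (xs, CW w) * marg₂ p w /
      (marg₁ (coclust p CX CW) xs * marg₂ (coclust p CX CW) (CW w))

/-- Conditional approximating distribution
`p̂(x|w*) = p*(C_X x, w*) · p₁(x) / (p₂*(w*) · p₁*(C_X x))` on `A`. -/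
def approxCondCol {A B As Bs : Type*} [Fintype A] [Fintype B] [Fintype As] [Fintype Bs]
    [DecidableEq As] [DecidableEq Bs]
    (p : A × B → ℝ) (CX : A → As) (CW : B → Bs) (ws : Bs) : A → ℝ :=
  fun x =>
    coclust p CX CW (CX x, ws) * marg₁ p x /
      (marg₂ (coclust p CX CW) ws * marg₁ (coclust p CX CW) (CX x))

/-- Mutual information `I(p) = ∑_{x,w} p(x,w) · log (p(x,w)/(p₁(x)·p₂(w)))`
(summing over all pairs; used for the strictly positive original distribution). -/
def mutualInfoFull {A B : Type*} [Fintype A] [Fintype B] (p : A × B → ℝ) : ℝ :=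
  ∑ x, ∑ w, p (x, w) * Real.log (p (x, w) / (marg₁ p x * marg₂ p w))

/-- Mutual information `I(p*) = ∑_{(x*,w*) : p*(x*,w*) > 0} p*(x*,w*) ·
log (p*(x*,w*)/(p₁*(x*)·p₂*(w*)))` (summing only over positive entries). -/
def mutualInfoPos {A B : Type*} [Fintype A] [Fintype B] (p : A × B → ℝ) : ℝ :=
  ∑ c ∈ Finset.univ.filter (fun c : A × B => 0 < p c),
    p c * Real.log (p c / (marg₁ p c.1 * marg₂ p c.2))

/-- The co-clustering objective `ℓ_A(C_X, C_W) = I(p) − I(p*)`. -/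
def lossA {A B As Bs : Type*} [Fintype A] [Fintype B] [Fintype As] [Fintype Bs]
    [DecidableEq As] [DecidableEq Bs]
    (p : A × B → ℝ) (CX : A → As) (CW : B → Bs) : ℝ :=
  mutualInfoFull p - mutualInfoPos (coclust p CX CW)

/-- The elastic coupled co-clustering objective
`ℓ_T(C_Y, C_Z) = I(q) − I(q*) + α·D(q₁*‖π) + β·D(q₂*‖ρ)`. -/
def lossT {A B As Bs : Type*} [Fintype A] [Fintype B] [Fintype As] [Fintype Bs]
    [DecidableEq As] [DecidableEq Bs]
    (q : A × B → ℝ) (CY : A → As) (CZ : B → Bs) (π : As → ℝ) (ρ : Bs → ℝ)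
    (α β : ℝ) : EReal :=
  ((mutualInfoFull q - mutualInfoPos (coclust q CY CZ) : ℝ) : EReal)
    + (α : EReal) * KLdiv (marg₁ (coclust q CY CZ)) π
    + (β : EReal) * KLdiv (marg₂ (coclust q CY CZ)) ρ

end

lemma ereal_coe_sum {T : Type*} (s : Finset T) (f : T → ℝ) :
    ((∑ t ∈ s, f t : ℝ) : EReal) = ∑ t ∈ s, ((f t : ℝ) : EReal) := by
  induction s using Finset.cons_induction with
  | empty => simp
  | cons a s ha ih => rw [Finset.sum_cons, Finset.sum_cons, EReal.coe_add, ih]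


/-- The KL divergence between `p` and its co-cluster approximation decomposes along
columns (features): `D(p ‖ p̂) = ∑_w p₂(w) · D(p(·|w) ‖ p̂(·|C_W w))`. -/
theorem KL_col_decomposition {X W Xs Ws : Type*} [Fintype X] [Fintype W] [Nonempty X] [Nonempty W]
    [Fintype Xs] [Fintype Ws] [DecidableEq Xs] [DecidableEq Ws]
    (p : X × W → ℝ) (hpos : ∀ c, 0 < p c) (hsum : ∑ c, p c = 1)
    (CX : X → Xs) (CW : W → Ws) :
    KLdiv p (approx p CX CW)
      = ∑ w : W, ((marg₂ p w : ℝ) : EReal)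
          * KLdiv (condCol p w) (approxCondCol p CX CW (CW w)) := by
  classical
  have h1 : ∀ x, 0 < marg₁ p x := fun x =>
    Finset.sum_pos (fun w _ => hpos (x, w)) Finset.univ_nonempty
  have h2 : ∀ w, 0 < marg₂ p w := fun w =>
    Finset.sum_pos (fun x _ => hpos (x, w)) Finset.univ_nonempty
  have hcc : ∀ x w, 0 < coclust p CX CW (CX x, CW w) := by
    intro x w
    refine Finset.sum_pos (fun a ha => Finset.sum_pos (fun b hb => hpos (a, b)) ?_) ?_
    · exact ⟨w, Finset.mem_filter.2 ⟨Finset.mem_univ _, rfl⟩⟩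
    · exact ⟨x, Finset.mem_filter.2 ⟨Finset.mem_univ _, rfl⟩⟩
  have hm1 : ∀ x, 0 < marg₁ (coclust p CX CW) (CX x) := by
    intro x
    obtain ⟨w⟩ := ‹Nonempty W›
    exact Finset.sum_pos' (fun ws _ => Finset.sum_nonneg fun a _ =>
      Finset.sum_nonneg fun b _ => (hpos (a, b)).le) ⟨CW w, Finset.mem_univ _, hcc x w⟩
  have hm2 : ∀ w, 0 < marg₂ (coclust p CX CW) (CW w) := by
    intro w
    obtain ⟨x⟩ := ‹Nonempty X›
    exact Finset.sum_pos' (fun xs _ => Finset.sum_nonneg fun a _ =>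
      Finset.sum_nonneg fun b _ => (hpos (a, b)).le) ⟨CX x, Finset.mem_univ _, hcc x w⟩
  have happ : ∀ c : X × W, 0 < approx p CX CW c := by
    intro ⟨x, w⟩
    exact div_pos (mul_pos (mul_pos (hcc x w) (h1 x)) (h2 w))
      (mul_pos (hm1 x) (hm2 w))
  have hacc : ∀ w x, 0 < approxCondCol p CX CW (CW w) x := by
    intro w x
    exact div_pos (mul_pos (hcc x w) (h1 x)) (mul_pos (hm2 w) (hm1 x))
  have hccond : ∀ w x, 0 < condCol p w x := fun w x => div_pos (hpos (x, w)) (h2 w)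
  rw [KLdiv, if_neg (by push_neg; exact fun c _ => (happ c).ne')]
  have hR : ∀ w : W, KLdiv (condCol p w) (approxCondCol p CX CW (CW w))
      = ((∑ x, condCol p w x * Real.log (condCol p w x / approxCondCol p CX CW (CW w) x) : ℝ) : EReal) := by
    intro w
    rw [KLdiv, if_neg (by push_neg; exact fun x _ => (hacc w x).ne')]
    congr 1
    rw [Finset.filter_true_of_mem (fun x _ => hccond w x)]
  simp only [hR, ← EReal.coe_mul]
  rw [← ereal_coe_sum]
  congr 1
  rw [Finset.filter_true_of_mem (fun c _ => hpos c), Fintype.sum_prod_type]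
  rw [Finset.sum_comm]
  refine Finset.sum_congr rfl fun w _ => ?_
  rw [Finset.mul_sum]
  refine Finset.sum_congr rfl fun x _ => ?_
  have key : condCol p w x / approxCondCol p CX CW (CW w) x
      = p (x, w) / approx p CX CW (x, w) := by
    have A := (hcc x w).ne'
    have B := (h1 x).ne'
    have C := (h2 w).ne'
    have D := (hm1 x).ne'
    have E := (hm2 w).ne'
    unfold condCol approxCondCol approx
    field_simp
  rw [key]
  unfold condCol
  rw [div_mul_eq_mul_div, mul_div_assoc', mul_comm (marg₂ p w), mul_div_assoc, div_self (h2 w).ne', mul_one]
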